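/- If liminf_{t→∞} S(t) ≥ ε > 0 for a solution of the colony migration subsystem (Q₁ = 0 or 1), then liminf_{t→∞} A(t) ≥ α_sa ε / (α_as + α_al) and, with ε_A denoting this bound, liminf_{t→∞} L(t) ≥ α_al ε_A / (α_lc + α_ls). -/

import Mathlib

open Filter

lemma key_liminf (b k : ℝ) (hb : 0 < b) (f g : ℝ → ℝ)
    (hf : ∀ t, HasDerivAt f (g t) t)
    (hlow : ∀ᶠ t in atTop, 0 ≤ f t) (M : ℝ) (hup : ∀ᶠ t in atTop, f t ≤ M)
    (h : ∀ᶠ t in atTop, k - b * f t ≤ g t) :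
    k / b ≤ liminf f atTop := by
  obtain ⟨t0, ht0⟩ := (hlow.and h).exists_forall_of_atTop
  set F : ℝ → ℝ := fun t => (f t - k / b) * Real.exp (b * t) with hFdef
  have hF : ∀ t, HasDerivAt F ((g t + b * f t - k) * Real.exp (b * t)) t := by
    intro t
    have h1 : HasDerivAt (fun t => f t - k / b) (g t) t := (hf t).sub_const _
    have h2 : HasDerivAt (fun t => Real.exp (b * t)) (b * Real.exp (b * t)) t := by
      simpa [mul_comm, Function.comp_def] using (Real.hasDerivAt_exp (b * t)).comp t ((hasDerivAt_id t).const_mul b)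
    have : HasDerivAt (fun t => (f t - k / b) * Real.exp (b * t))
        (g t * Real.exp (b * t) + (f t - k / b) * (b * Real.exp (b * t))) t := h1.mul h2
    convert this using 1
    have hkb : k / b * b = k := div_mul_cancel₀ k hb.ne'
    linear_combination Real.exp (b * t) * hkb
  have hmono : MonotoneOn F (Set.Ici t0) := by
    apply monotoneOn_of_deriv_nonneg (convex_Ici t0)
      (fun t _ => (hF t).continuousAt.continuousWithinAt)
      (fun t _ => ((hF t).differentiableAt.differentiableWithinAt))
    intro t ht
    rw [interior_Ici] at ht
    rw [(hF t).deriv]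
    have h3 := (ht0 t (le_of_lt ht)).2
    have : (0:ℝ) ≤ g t + b * f t - k := by linarith
    exact mul_nonneg this (le_of_lt (Real.exp_pos _))
  have hcomp : ∀ t ≥ t0, k / b + (f t0 - k / b) * Real.exp (b * t0 - b * t) ≤ f t := by
    intro t ht
    have := hmono (Set.self_mem_Ici) (Set.mem_Ici.mpr ht) ht
    have hE : (0:ℝ) < Real.exp (b * t) := Real.exp_pos _
    have : (f t0 - k / b) * Real.exp (b * t0) * Real.exp (-(b * t)) ≤
        (f t - k / b) * Real.exp (b * t) * Real.exp (-(b * t)) := by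
      apply mul_le_mul_of_nonneg_right this (le_of_lt (Real.exp_pos _))
    rw [mul_assoc, mul_assoc, ← Real.exp_add, ← Real.exp_add] at this
    simp only [add_neg_cancel, Real.exp_zero, mul_one] at this
    have : (f t0 - k / b) * Real.exp (b * t0 - b * t) ≤ f t - k / b := by
      simpa [sub_eq_add_neg] using this
    linarith
  set m : ℝ → ℝ := fun t => k / b + (f t0 - k / b) * Real.exp (b * t0 - b * t)
  have hm : Tendsto m atTop (nhds (k / b)) := by
    have h1 : Tendsto (fun t : ℝ => b * t0 - b * t) atTop atBot := by
      apply tendsto_atBot_add_const_left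
      exact (tendsto_neg_atBot_iff.mpr (tendsto_atTop_atTop_of_monotone
        (fun x y hxy => by nlinarith) (fun c => ⟨c / b, by field_simp; exact le_rfl⟩)))
    have h2 : Tendsto m atTop (nhds (k / b + (f t0 - k / b) * 0)) := by
      exact tendsto_const_nhds.add (tendsto_const_nhds.mul
        (Real.tendsto_exp_atBot.comp h1))
    simpa using h2
  have h4 : liminf m atTop = k / b := hm.liminf_eq
  calc k / b = liminf m atTop := h4.symm
    _ ≤ liminf f atTop := by
        apply liminf_le_liminf
        · filter_upwards [eventually_ge_atTop t0] with t ht using hcomp t ht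
        · exact hm.isBoundedUnder_ge
        · exact isCoboundedUnder_ge_of_eventually_le atTop hup

/-- persistence of S yields persistence of A and L. -/
theorem stmt3_persistence_A_L
    (asa aas aal alc als acs bls bcs ρ N Q₁ ε : ℝ)
    (hasa : 0 < asa) (haas : 0 < aas) (haal : 0 < aal) (halc : 0 < alc)
    (hals : 0 < als) (hacs : 0 < acs) (hbls : 0 < bls) (hbcs : 0 < bcs)
    (hρ : 0 < ρ) (hρ1 : ρ < 1) (hN : 0 < N) (hQ : Q₁ = 0 ∨ Q₁ = 1)
    (hε : 0 < ε)
    (A L C : ℝ → ℝ)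
    (hA : ∀ t, HasDerivAt A
      ((asa + bls * L t + bcs * C t) * (ρ * N - A t - L t - C t) - (aas + aal) * A t) t)
    (hL : ∀ t, HasDerivAt L (aal * A t - (alc * Q₁ + als) * L t) t)
    (hC : ∀ t, HasDerivAt C (alc * Q₁ * L t - acs * C t) t)
    (hΓ : ∀ t ≥ (0 : ℝ), 0 ≤ A t ∧ 0 ≤ L t ∧ 0 ≤ C t ∧ A t + L t + C t ≤ ρ * N)
    (hSliminf : ε ≤ liminf (fun t => ρ * N - A t - L t - C t) atTop) :
    (asa * ε / (aas + aal)) ≤ liminf (fun t => A t) atTop ∧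
      (aal * (asa * ε / (aas + aal)) / (alc + als)) ≤ liminf (fun t => L t) atTop := by
  have hbaa : 0 < aas + aal := by linarith
  have hbal : 0 < alc + als := by linarith
  have hEv : ∀ᶠ t in atTop, 0 ≤ A t ∧ 0 ≤ L t ∧ 0 ≤ C t ∧ A t + L t + C t ≤ ρ * N := by
    filter_upwards [eventually_ge_atTop (0:ℝ)] with t ht using hΓ t ht
  -- Part A
  have hPartA : asa * ε / (aas + aal) ≤ liminf (fun t => A t) atTop := by
    apply le_of_forall_sub_le
    intro δ hδ
    set c : ℝ := ε - δ * (aas + aal) / asa with hcdef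
    have hcε : c < ε := by
      have : 0 < δ * (aas + aal) / asa := by positivity
      simp only [hcdef]; linarith
    have hclt : c < liminf (fun t => ρ * N - A t - L t - C t) atTop :=
      lt_of_lt_of_le hcε hSliminf
    have hevS : ∀ᶠ t in atTop, c < ρ * N - A t - L t - C t := by
      have hbd : IsBoundedUnder (· ≥ ·) atTop (fun t => ρ * N - A t - L t - C t) := by
        refine ⟨0, eventually_map.mpr ?_⟩
        filter_upwards [hEv] with t ⟨h1, h2, h3, h4⟩
        simp only [ge_iff_le]; linarith
      exact eventually_lt_of_lt_liminf hclt hbd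
    have key := key_liminf (aas + aal) (asa * c) hbaa A
      (fun t => (asa + bls * L t + bcs * C t) * (ρ * N - A t - L t - C t) - (aas + aal) * A t)
      hA (by filter_upwards [hEv] with t ht using ht.1) (ρ * N)
      (by filter_upwards [hEv] with t ⟨h1, h2, h3, h4⟩; linarith)
      (by
        filter_upwards [hEv, hevS] with t ⟨h1, h2, h3, h4⟩ h5
        have hS : (0:ℝ) ≤ ρ * N - A t - L t - C t := by linarith
        nlinarith [mul_nonneg (mul_nonneg hbls.le h2) hS, mul_nonneg (mul_nonneg hbcs.le h3) hS])
    have heq : asa * c / (aas + aal) = asa * ε / (aas + aal) - δ := by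
      simp only [hcdef]; field_simp
    rw [heq] at key
    exact key
  refine ⟨hPartA, ?_⟩
  -- Part L
  apply le_of_forall_sub_le
  intro δ hδ
  set εA : ℝ := asa * ε / (aas + aal) with hεAdef
  set c : ℝ := εA - δ * (alc + als) / aal with hcdef
  have hcε : c < εA := by
    have : 0 < δ * (alc + als) / aal := by positivity
    simp only [hcdef]; linarith
  have hclt : c < liminf (fun t => A t) atTop := lt_of_lt_of_le hcε hPartA
  have hevA : ∀ᶠ t in atTop, c < A t := by
    have hbd : IsBoundedUnder (· ≥ ·) atTop (fun t => A t) := by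
      refine ⟨0, eventually_map.mpr ?_⟩
      filter_upwards [hEv] with t ⟨h1, h2, h3, h4⟩
      simp only [ge_iff_le]; linarith
    exact eventually_lt_of_lt_liminf hclt hbd
  have key := key_liminf (alc + als) (aal * c) hbal L
    (fun t => aal * A t - (alc * Q₁ + als) * L t)
    hL (by filter_upwards [hEv] with t ht using ht.2.1) (ρ * N)
    (by filter_upwards [hEv] with t ⟨h1, h2, h3, h4⟩; linarith)
    (by
      filter_upwards [hEv, hevA] with t ⟨h1, h2, h3, h4⟩ h5
      have hQ1 : alc * Q₁ ≤ alc := by rcases hQ with h | h <;> simp [h] <;> linarith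
      nlinarith)
  have heq : aal * c / (alc + als) = aal * εA / (alc + als) - δ := by
    simp only [hcdef]; field_simp
  rw [heq] at key
  exact key
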